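/- Let A be a dg algebra whose cohomology H*(A), viewed as a subspace H ⊂ A complementing boundaries inside cocycles, is closed under multiplication (i.e. the product of any two elements of H lies in H). Take the Merkulov homotopy Q with Q|_H = 0. Then the induced minimal A_∞-structure on H*(A) satisfies m_n = 0 for all n ≥ 3, i.e. A is formal. -/

import Mathlib

/-- Formality via Merkulov's construction.  Let `A` be a (dg) graded
algebra with grading `𝒜`, `H ⊆ A` a subspace (representing the cohomology `H*(A)`,
complementing the boundaries inside the cocycles) which is closed under multiplication,
`Q` the Merkulov homotopy with `Q|_H = 0`, `Π` the projection of `A` onto `H`, and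
`lam n` the Merkulov operations (recursively defined from `Q` and the product, with
`Q(lam 1 x) = −x`).  Then the induced minimal A_∞-structure `m_n = Π ∘ lam n` on
`H*(A)` vanishes for all `n ≥ 3`: on homogeneous arguments from `H` one has
`lam n = 0` and hence `m_n = Π(lam n) = 0`, i.e. `A` is formal. -/
theorem stmt_18 {K A : Type*} [Field K] [Ring A] [Algebra K A]
    (𝒜 : ℤ → Submodule K A)
    (hmul : ∀ (p q : ℤ) (x y : A), x ∈ 𝒜 p → y ∈ 𝒜 q → x * y ∈ 𝒜 (p + q))
    (H : Submodule K A)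
    (hHmul : ∀ x y : A, x ∈ H → y ∈ H → x * y ∈ H)
    (Q : A →ₗ[K] A)
    (hQ : ∀ (p : ℤ) (x : A), x ∈ 𝒜 p → Q x ∈ 𝒜 (p - 1))
    (hQH : ∀ x ∈ H, Q x = 0)
    (Pi : A →ₗ[K] A)
    (hPiH : ∀ x ∈ H, Pi x = x)
    (lam : ∀ n : ℕ, (Fin n → A) → A)
    (hlam2 : ∀ a : Fin 2 → A, lam 2 a = a 0 * a 1)
    (hrec : ∀ (n : ℕ) (hn : 3 ≤ n) (dd : Fin n → ℤ) (a : Fin n → A),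
      (∀ i, a i ∈ 𝒜 (dd i)) →
      lam n a = - ∑ kk : Fin n,
        if hk : 1 ≤ (kk : ℕ) then
          ((-1 : K) ^ ((kk : ℕ) + ((n : ℤ) - (kk : ℕ) - 1) *
              ∑ i ∈ Finset.univ.filter (fun i : Fin n => (i : ℕ) < (kk : ℕ)), dd i)) •
          ((if h1 : (kk : ℕ) = 1 then
              -(a ⟨0, by omega⟩)
            else
              Q (lam (kk : ℕ) (fun i : Fin (kk : ℕ) => a (Fin.castLE kk.isLt.le i)))) *
           (if h2 : n - (kk : ℕ) = 1 then
              -(a ⟨(kk : ℕ), kk.isLt⟩)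
            else
              Q (lam (n - (kk : ℕ))
                (fun i : Fin (n - (kk : ℕ)) =>
                  a ⟨(kk : ℕ) + (i : ℕ), by have := i.isLt; have := kk.isLt; omega⟩))))
        else 0) :
    ∀ (n : ℕ), 3 ≤ n → ∀ (dd : Fin n → ℤ) (a : Fin n → A),
      (∀ i, a i ∈ 𝒜 (dd i)) → (∀ i, a i ∈ H) →
      lam n a = 0 ∧ Pi (lam n a) = 0 := by
  intro n
  induction n using Nat.strong_induction_on with
  | _ n ih =>
    intro hn dd a hdd hH
    have key : ∀ m, 2 ≤ m → m < n → ∀ (dd' : Fin m → ℤ) (b : Fin m → A),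
        (∀ i, b i ∈ 𝒜 (dd' i)) → (∀ i, b i ∈ H) → Q (lam m b) = 0 := by
      intro m hm hm' dd' b hb hbH
      rcases eq_or_lt_of_le hm with h2 | h3
      · subst h2
        rw [hlam2]
        exact hQH _ (hHmul _ _ (hbH 0) (hbH 1))
      · rw [(ih m hm' h3 dd' b hb hbH).1, map_zero]
    have hzero : lam n a = 0 := by
      rw [hrec n hn dd a hdd, neg_eq_zero]
      apply Finset.sum_eq_zero
      intro kk _
      by_cases hk : 1 ≤ (kk : ℕ)
      · rw [dif_pos hk]
        by_cases h1 : (kk : ℕ) = 1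
        · rw [dif_pos h1]
          have hne : n - (kk : ℕ) ≠ 1 := by omega
          rw [dif_neg hne]
          rw [key (n - (kk : ℕ)) (by omega) (by omega)
            (fun i => dd ⟨(kk : ℕ) + (i : ℕ), by have := i.isLt; have := kk.isLt; omega⟩)
            _ (fun i => hdd _) (fun i => hH _), mul_zero, smul_zero]
        · rw [dif_neg h1]
          have hk2 : 2 ≤ (kk : ℕ) := by omega
          rw [key (kk : ℕ) hk2 kk.isLt (fun i => dd (Fin.castLE kk.isLt.le i))
            _ (fun i => hdd _) (fun i => hH _), zero_mul, smul_zero]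
      · rw [dif_neg hk]
    exact ⟨hzero, by rw [hzero, map_zero]⟩
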